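/- Every continuous function Φ : ℝ^{3×n} → ℝ that is invariant under simultaneous O(3) rotation, translation, and permutation of the n points factors through the map sending X to the equivalence class of its centralized pairwise-distance matrix: if D(X) = D(X') as multisets of rows/columns up to simultaneous permutation, where D(X)_{ij} = ‖x_i − x_j‖, then Φ(X) = Φ(X'). Conversely, any function of the pairwise-distance matrix that is invariant to simultaneous row-column permutation induces a well-defined O(3)-, translation-, and permutation-invariant function on point clouds. -/

import Mathlib

open Finset

local notation "E" => EuclideanSpace ℝ (Fin 3)

/-- Two families with equal Gram matrices are related by a linear isometry equivalence. -/
lemma exists_linIso_of_gram {n : ℕ} (u v : Fin n → EuclideanSpace ℝ (Fin 3))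
    (h : ∀ i j, inner ℝ (u i) (u j) = (inner ℝ (v i) (v j) : ℝ)) :
    ∃ L : EuclideanSpace ℝ (Fin 3) ≃ₗᵢ[ℝ] EuclideanSpace ℝ (Fin 3), ∀ i, L (u i) = v i := by
  set T : (Fin n → ℝ) →ₗ[ℝ] E := Fintype.linearCombination ℝ u with hT
  set T' : (Fin n → ℝ) →ₗ[ℝ] E := Fintype.linearCombination ℝ v with hT'
  have hinner : ∀ c : Fin n → ℝ, (inner ℝ (T c) (T c) : ℝ) = inner ℝ (T' c) (T' c) := by
    intro c
    simp only [hT, hT', Fintype.linearCombination_apply, inner_sum, sum_inner,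
      real_inner_smul_left, real_inner_smul_right]
    exact Finset.sum_congr rfl fun i _ => Finset.sum_congr rfl fun j _ => by rw [h]
  have hnorm : ∀ c : Fin n → ℝ, ‖T c‖ = ‖T' c‖ := by
    intro c
    rw [← sq_eq_sq₀ (norm_nonneg _) (norm_nonneg _), ← real_inner_self_eq_norm_sq,
      ← real_inner_self_eq_norm_sq, hinner]
  have hker : LinearMap.ker T ≤ LinearMap.ker T' := by
    intro c hc
    simp only [LinearMap.mem_ker] at hc ⊢
    have := hnorm c
    rw [hc, norm_zero] at this
    exact norm_eq_zero.mp this.symm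
  let f : LinearMap.range T →ₗ[ℝ] E :=
    (Submodule.liftQ (LinearMap.ker T) T' hker).comp
      (T.quotKerEquivRange.symm : LinearMap.range T ≃ₗ[ℝ] _).toLinearMap
  have hf : ∀ (c : Fin n → ℝ) (hc : T c ∈ LinearMap.range T), f ⟨T c, hc⟩ = T' c := by
    intro c hc
    simp only [f, LinearMap.coe_comp, Function.comp_apply, LinearEquiv.coe_coe,
      LinearMap.quotKerEquivRange_symm_apply_image, Submodule.mkQ_apply, Submodule.liftQ_apply]
  have hfn : ∀ x : LinearMap.range T, ‖f x‖ = ‖x‖ := by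
    rintro ⟨x, hx⟩
    obtain ⟨c, rfl⟩ := hx
    rw [hf c (LinearMap.mem_range_self T c), ← hnorm]
    rfl
  let Li : LinearMap.range T →ₗᵢ[ℝ] E := ⟨f, hfn⟩
  let L0 : E →ₗᵢ[ℝ] E := Li.extend
  refine ⟨L0.toLinearIsometryEquiv rfl, fun i => ?_⟩
  have hui : T (Pi.single i 1) = u i := by
    rw [hT, Fintype.linearCombination_apply_single, one_smul]
  have hmem : u i ∈ LinearMap.range T := ⟨Pi.single i 1, hui⟩
  have : L0 (u i) = Li ⟨u i, hmem⟩ := by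
    have := Li.extend_apply ⟨u i, hmem⟩
    simpa using this
  rw [LinearIsometry.toLinearIsometryEquiv_apply, this]
  show f ⟨u i, hmem⟩ = v i
  have : f ⟨u i, hmem⟩ = T' (Pi.single i 1) := by
    have h2 : (⟨u i, hmem⟩ : LinearMap.range T) = ⟨T (Pi.single i 1), LinearMap.mem_range_self _ _⟩ := by
      simp [hui]
    rw [h2, hf]
  rw [this, hT', Fintype.linearCombination_apply_single, one_smul]

/-- Equal pairwise distances give a rigid motion. -/
lemma exists_rigid {n : ℕ} (X Y : Fin n → EuclideanSpace ℝ (Fin 3))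
    (h : ∀ i j, ‖X i - X j‖ = ‖Y i - Y j‖) :
    ∃ (R : EuclideanSpace ℝ (Fin 3) ≃ₗᵢ[ℝ] EuclideanSpace ℝ (Fin 3))
      (t : EuclideanSpace ℝ (Fin 3)), ∀ i, Y i = R (X i) + t := by
  rcases Nat.eq_zero_or_pos n with hn | hn
  · exact ⟨LinearIsometryEquiv.refl ℝ _, 0, fun i => absurd i.2 (by omega)⟩
  · let i0 : Fin n := ⟨0, hn⟩
    set u : Fin n → E := fun i => X i - X i0 with hu
    set v : Fin n → E := fun i => Y i - Y i0 with hv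
    have hgram : ∀ i j, inner ℝ (u i) (u j) = (inner ℝ (v i) (v j) : ℝ) := by
      intro i j
      have h1 : ‖u i‖ = ‖v i‖ := h i i0
      have h2 : ‖u j‖ = ‖v j‖ := h j i0
      have h3 : ‖u i - u j‖ = ‖v i - v j‖ := by
        have : u i - u j = X i - X j := by simp only [hu]; abel
        have h' : v i - v j = Y i - Y j := by simp only [hv]; abel
        rw [this, h', h]
      have e1 := norm_sub_sq_real (u i) (u j)
      have e2 := norm_sub_sq_real (v i) (v j)
      rw [h1, h2, h3, e2] at e1
      linarith
    obtain ⟨L, hL⟩ := exists_linIso_of_gram u v hgram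
    refine ⟨L, Y i0 - L (X i0), fun i => ?_⟩
    have := hL i
    simp only [hu, hv, map_sub] at this
    have : L (X i) = Y i - Y i0 + L (X i0) := by
      rw [← sub_eq_iff_eq_add]; exact this
    rw [this]; abel

/-- A continuous function on 3D point clouds invariant to rotations, translations and
permutations factors through the pairwise-distance matrix up to simultaneous permutation;
conversely, any simultaneous-permutation-invariant function of the pairwise-distance matrix
induces a rotation-, translation- and permutation-invariant function on point clouds. -/
theorem invariant_factors_through_distance_matrix (n : ℕ) :
    (∀ Φ : (Fin n → EuclideanSpace ℝ (Fin 3)) → ℝ, Continuous Φ →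
      (∀ (τ : Equiv.Perm (Fin n))
         (R : EuclideanSpace ℝ (Fin 3) ≃ₗᵢ[ℝ] EuclideanSpace ℝ (Fin 3))
         (t : EuclideanSpace ℝ (Fin 3)) (X : Fin n → EuclideanSpace ℝ (Fin 3)),
         Φ (fun i => R (X (τ i)) + t) = Φ X) →
      ∀ X X' : Fin n → EuclideanSpace ℝ (Fin 3),
        (∃ τ : Equiv.Perm (Fin n), ∀ i j, ‖X i - X j‖ = ‖X' (τ i) - X' (τ j)‖) →
        Φ X = Φ X') ∧
    (∀ F : (Fin n → Fin n → ℝ) → ℝ,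
      (∀ (τ : Equiv.Perm (Fin n)) (D : Fin n → Fin n → ℝ),
        F (fun i j => D (τ i) (τ j)) = F D) →
      ∀ (τ : Equiv.Perm (Fin n))
        (R : EuclideanSpace ℝ (Fin 3) ≃ₗᵢ[ℝ] EuclideanSpace ℝ (Fin 3))
        (t : EuclideanSpace ℝ (Fin 3)) (X : Fin n → EuclideanSpace ℝ (Fin 3)),
        F (fun i j => ‖(R (X (τ i)) + t) - (R (X (τ j)) + t)‖) =
          F (fun i j => ‖X i - X j‖)) := by
  constructor
  · intro Φ _ hinv X X' ⟨τ, hτ⟩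
    obtain ⟨R, t, hRt⟩ := exists_rigid X (fun i => X' (τ i)) hτ
    have h1 : Φ (fun i => R (X ((1 : Equiv.Perm (Fin n)) i)) + t) = Φ X := hinv 1 R t X
    have h2 : Φ (fun i => (LinearIsometryEquiv.refl ℝ (EuclideanSpace ℝ (Fin 3))) (X' (τ i)) + 0)
        = Φ X' := hinv τ (LinearIsometryEquiv.refl ℝ _) 0 X'
    simp only [Equiv.Perm.one_apply, LinearIsometryEquiv.coe_refl, id_eq, add_zero] at h1 h2
    rw [← h1, ← h2]
    congr 1
    funext i
    exact (hRt i).symm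
  · intro F hF τ R t X
    have : (fun i j => ‖(R (X (τ i)) + t) - (R (X (τ j)) + t)‖)
        = (fun i j => ‖X (τ i) - X (τ j)‖) := by
      funext i j
      rw [add_sub_add_right_eq_sub, ← map_sub, LinearIsometryEquiv.norm_map R]
    rw [this]
    exact hF τ (fun i j => ‖X i - X j‖)
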